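/- Let (V,q) be a nondegenerate quadratic space and τ an isometry with (τ - id)² = 0. If W is a complement of R(τ) in K(τ) and τ' denotes the restriction of τ to W^⊥, then K(τ') = R(τ') = R(τ). -/

import Mathlib

theorem wall_stmt10 {F V : Type*} [Field F] [AddCommGroup V] [Module F V]
    [FiniteDimensional F V] (q : QuadraticForm F V)
    (hq : LinearMap.BilinForm.Nondegenerate (QuadraticMap.polarBilin q))
    (τ : V →ₗ[F] V) (hτ : ∀ x, q (τ x) = q x)
    (h2 : (τ - LinearMap.id) ∘ₗ (τ - LinearMap.id) = 0)
    (W : Submodule F V)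
    (hW1 : W ⊓ LinearMap.range (τ - LinearMap.id) = ⊥)
    (hW2 : W ⊔ LinearMap.range (τ - LinearMap.id) = LinearMap.ker (τ - LinearMap.id)) :
    {x : V | x ∈ LinearMap.BilinForm.orthogonal (QuadraticMap.polarBilin q) W ∧ τ x = x} =
      {v : V | ∃ x ∈ LinearMap.BilinForm.orthogonal (QuadraticMap.polarBilin q) W,
        τ x - x = v} ∧
    {v : V | ∃ x ∈ LinearMap.BilinForm.orthogonal (QuadraticMap.polarBilin q) W,
        τ x - x = v} = (LinearMap.range (τ - LinearMap.id) : Set V) := by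
  set B := QuadraticMap.polarBilin q with hBdef
  set σ := τ - LinearMap.id with hσdef
  have hσapp : ∀ x, σ x = τ x - x := fun x => rfl
  have hσσ : ∀ x, σ (σ x) = 0 := by
    intro x
    have := LinearMap.ext_iff.mp h2 x
    simpa using this
  have hBapp : ∀ x y : V, B x y = q (x + y) - q x - q y := by
    intro x y
    simp [hBdef, QuadraticMap.polarBilin_apply_apply, QuadraticMap.polar]
  have hsymm : ∀ x y : V, B x y = B y x := by
    intro x y
    rw [hBapp, hBapp, add_comm]
    ring
  have hrefl : B.IsRefl := fun x y h => by rw [hsymm]; exact h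
  have hBinv : ∀ x y : V, B (τ x) (τ y) = B x y := by
    intro x y
    rw [hBapp, hBapp, ← map_add, hτ, hτ, hτ]
  have hsub1 : ∀ x y : V, B (σ x) y = B (τ x) y - B x y := by
    intro x y
    rw [hσapp, map_sub, LinearMap.sub_apply]
  have hstep : ∀ x y : V, B (σ x) y = - B (τ x) (σ y) := by
    intro x y
    rw [hsub1, hσapp, map_sub, ← hBinv x y]
    ring
  have hRiso : ∀ x y : V, B (σ x) (σ y) = 0 := by
    intro x y
    rw [hstep, hσσ, map_zero, neg_zero]
  have hKR : ∀ x : V, τ x = x ↔ ∀ y, B (σ y) x = 0 := by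
    intro x
    constructor
    · intro hx y
      rw [hstep]
      have : σ x = 0 := by rw [hσapp, hx, sub_self]
      rw [this, map_zero, neg_zero]
    · intro h
      have hσx : σ x = 0 := by
        apply hq.1
        intro y
        have hτx : τ x = x + σ x := by rw [hσapp]; abel
        rw [hstep, hsymm, hτx, map_add, h y, hRiso, add_zero, neg_zero]
      have := hσapp x
      rw [hσx] at this
      exact (sub_eq_zero.mp this.symm)
  -- K = orthogonal R
  have hKorthR : LinearMap.ker σ = LinearMap.BilinForm.orthogonal B (LinearMap.range σ) := by
    ext x
    rw [LinearMap.mem_ker, LinearMap.BilinForm.mem_orthogonal_iff]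
    constructor
    · intro hx n hn
      obtain ⟨y, rfl⟩ := hn
      have hτx : τ x = x := by
        have := hσapp x; rw [hx] at this; exact sub_eq_zero.mp this.symm
      exact (hKR x).mp hτx y
    · intro h
      have hτx : τ x = x := (hKR x).mpr (fun y => h (σ y) ⟨y, rfl⟩)
      rw [hσapp, hτx, sub_self]
  have hRW : LinearMap.range σ ≤ LinearMap.BilinForm.orthogonal B W := by
    rintro r ⟨x, rfl⟩ w hw
    have hwK : w ∈ LinearMap.ker σ := hW2 ▸ Submodule.mem_sup_left hw
    have hσw : σ w = 0 := LinearMap.mem_ker.mp hwK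
    rw [hsymm, hstep, hσw, map_zero, neg_zero]
  have hRK : LinearMap.range σ ≤ LinearMap.ker σ := by
    rintro r ⟨x, rfl⟩
    exact LinearMap.mem_ker.mpr (hσσ x)
  -- orthogonal of K is R
  have horthK : LinearMap.BilinForm.orthogonal B (LinearMap.ker σ) = LinearMap.range σ := by
    rw [hKorthR, LinearMap.BilinForm.orthogonal_orthogonal hq hrefl]
  -- W^⊥ ⊔ K = ⊤
  have hcompl : LinearMap.BilinForm.orthogonal B W ⊔ LinearMap.ker σ = ⊤ := by
    have hbot : LinearMap.BilinForm.orthogonal B (LinearMap.BilinForm.orthogonal B W ⊔ LinearMap.ker σ) = ⊥ := by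
      rw [eq_bot_iff]
      intro x hx
      have hxW : x ∈ W := by
        have := LinearMap.BilinForm.orthogonal_le
          (le_sup_left : LinearMap.BilinForm.orthogonal B W ≤ _) hx
        rwa [LinearMap.BilinForm.orthogonal_orthogonal hq hrefl] at this
      have hxR : x ∈ LinearMap.range σ := by
        have := LinearMap.BilinForm.orthogonal_le
          (le_sup_right : LinearMap.ker σ ≤ _) hx
        rwa [horthK] at this
      exact hW1 ▸ Submodule.mem_inf.mpr ⟨hxW, hxR⟩
    have := congrArg (LinearMap.BilinForm.orthogonal B) hbot
    rw [LinearMap.BilinForm.orthogonal_orthogonal hq hrefl,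
      LinearMap.BilinForm.orthogonal_bot] at this
    exact this
  -- second set equality
  have keyB : {v : V | ∃ x ∈ LinearMap.BilinForm.orthogonal B W, τ x - x = v} =
      (LinearMap.range σ : Set V) := by
    ext v
    constructor
    · rintro ⟨x, _, rfl⟩
      exact ⟨x, (hσapp x).symm ▸ rfl⟩
    · rintro ⟨x, rfl⟩
      have hx : x ∈ LinearMap.BilinForm.orthogonal B W ⊔ LinearMap.ker σ := hcompl ▸ Submodule.mem_top
      obtain ⟨y, hy, k, hk, rfl⟩ := Submodule.mem_sup.mp hx
      refine ⟨y, hy, ?_⟩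
      rw [← hσapp, map_add, LinearMap.mem_ker.mp hk, add_zero]
  have keyA : {x : V | x ∈ LinearMap.BilinForm.orthogonal B W ∧ τ x = x} = (LinearMap.range σ : Set V) := by
    ext x
    constructor
    · rintro ⟨hx1, hx2⟩
      have hxK : x ∈ LinearMap.ker σ := by
        rw [LinearMap.mem_ker, hσapp, hx2, sub_self]
      rw [← hW2] at hxK
      obtain ⟨w, hw, r, hr, rfl⟩ := Submodule.mem_sup.mp hxK
      have hw0 : w = 0 := by
        have hwWR : w ∈ LinearMap.BilinForm.orthogonal B (W ⊔ LinearMap.range σ) := by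
          intro n hn
          obtain ⟨w', hw', r', hr', rfl⟩ := Submodule.mem_sup.mp hn
          have h1 : B w' w = 0 := by
            have e1 : B w' (w + r) = 0 := hx1 w' hw'
            have e2 : B w' r = 0 := hRW hr w' hw'
            rw [map_add] at e1
            linear_combination e1 - e2
          have h2 : B r' w = 0 := by
            have hwK : w ∈ LinearMap.ker σ := hW2 ▸ Submodule.mem_sup_left hw
            rw [hKorthR] at hwK
            exact hwK r' hr'
          rw [map_add, LinearMap.add_apply, h1, h2,
            add_zero]
        rw [hW2, horthK] at hwWR
        have : w ∈ W ⊓ LinearMap.range σ := Submodule.mem_inf.mpr ⟨hw, hwWR⟩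
        rw [hW1] at this
        exact this
      rw [hw0, zero_add]
      exact hr
    · rintro hx
      refine ⟨hRW hx, ?_⟩
      have : σ x = 0 := LinearMap.mem_ker.mp (hRK hx)
      rw [hσapp] at this
      exact sub_eq_zero.mp this
  exact ⟨keyA.trans keyB.symm, keyB⟩
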